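/- Let A be an (n+1)×(n+1) orthogonal matrix with first column (1/√(n+1))𝟙_{n+1}, blocks as in the reduction construction with a ≥ 0, and let Ã be the resulting n×n orthogonal matrix. Then ‖Ã‖ ≤ ‖A‖·((n+1)/n + √((n+1)/n)·‖A‖), where ‖·‖ is the max-entry norm. -/

import Mathlib

open Real Matrix

/-- The maximum absolute value of the entries of a real matrix. -/
noncomputable def maxEntry {m n : Type*} [Fintype m] [Fintype n]
    (A : Matrix m n ℝ) : ℝ := ⨆ i : m, ⨆ j : n, |A i j|

lemma abs_le_maxEntry {m n : Type*} [Fintype m] [Fintype n]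
    (A : Matrix m n ℝ) (i : m) (j : n) : |A i j| ≤ maxEntry A :=
  le_trans (le_ciSup (f := fun j => |A i j|) (Finite.bddAbove_range _) j)
    (le_ciSup (f := fun i => ⨆ j, |A i j|) (Finite.bddAbove_range _) i)

lemma maxEntry_le {m n : Type*} [Fintype m] [Fintype n] [Nonempty m] [Nonempty n]
    {A : Matrix m n ℝ} {R : ℝ} (h : ∀ i j, |A i j| ≤ R) : maxEntry A ≤ R :=
  ciSup_le fun i => ciSup_le fun j => h i j

/-- Norm bound for the reduction construction (n = m+1): if A is an (n+1)×(n+1)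
orthogonal matrix with first column (1/√(n+1))𝟙, blocks a ≥ 0, u, v, X, and Ã is the
reduced n×n matrix, then ‖Ã‖ ≤ ‖A‖·((n+1)/n + √((n+1)/n)·‖A‖). -/
theorem stmt15 (m : ℕ) (A : Matrix (Fin (m + 2)) (Fin (m + 2)) ℝ)
    (hA : A ∈ Matrix.orthogonalGroup (Fin (m + 2)) ℝ)
    (hcol : ∀ i, A i 0 = 1 / Real.sqrt (m + 2))
    (a : ℝ) (u : Fin m → ℝ) (v : Fin (m + 1) → ℝ)
    (X : Matrix (Fin (m + 1)) (Fin m) ℝ)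
    (ha : a = A 0 1) (hu : ∀ j : Fin m, u j = A 0 ⟨j.1 + 2, by omega⟩)
    (hv : ∀ i : Fin (m + 1), v i = A i.succ 1)
    (hX : ∀ (i : Fin (m + 1)) (j : Fin m), X i j = A i.succ ⟨j.1 + 2, by omega⟩)
    (hge : 0 ≤ a)
    (At : Matrix (Fin (m + 1)) (Fin (m + 1)) ℝ)
    (hAt0 : ∀ i, At i 0 = 1 / Real.sqrt (m + 1))
    (hAt : ∀ (i : Fin (m + 1)) (j : Fin m),
      At i j.succ = X i j +
        (Real.sqrt ((m + 1) / (m + 2)) + a)⁻¹ *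
          ((-v i + 1 / Real.sqrt ((m + 1) * (m + 2))) * u j)) :
    maxEntry At ≤ maxEntry A *
      ((m + 2) / (m + 1) + Real.sqrt ((m + 2) / (m + 1)) * maxEntry A) := by
  have hp : (0:ℝ) < (m:ℝ) + 1 := by positivity
  have hq : (0:ℝ) < (m:ℝ) + 2 := by positivity
  set sp : ℝ := Real.sqrt ((m:ℝ) + 1) with hspdef
  set sq : ℝ := Real.sqrt ((m:ℝ) + 2) with hsqdef
  have hsp0 : 0 < sp := Real.sqrt_pos.2 hp
  have hsq0 : 0 < sq := Real.sqrt_pos.2 hq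
  have hsp2 : sp * sp = (m:ℝ) + 1 := Real.mul_self_sqrt hp.le
  have hsq2 : sq * sq = (m:ℝ) + 2 := Real.mul_self_sqrt hq.le
  have hsple : sp ≤ sq := Real.sqrt_le_sqrt (by linarith)
  have hdiv1 : Real.sqrt (((m:ℝ) + 1) / ((m:ℝ) + 2)) = sp / sq := Real.sqrt_div hp.le _
  have hdiv2 : Real.sqrt (((m:ℝ) + 2) / ((m:ℝ) + 1)) = sq / sp := Real.sqrt_div hq.le _
  have hmul : Real.sqrt (((m:ℝ) + 1) * ((m:ℝ) + 2)) = sp * sq := Real.sqrt_mul hp.le _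
  set M : ℝ := maxEntry A with hMdef
  have hM : 1 / sq ≤ M := by
    have h := abs_le_maxEntry A 0 0
    rw [hcol 0, abs_of_pos (by positivity)] at h
    exact h
  have hM0 : 0 ≤ M := le_trans (by positivity) hM
  rw [hdiv2]
  apply maxEntry_le
  intro i j
  induction j using Fin.cases with
  | zero =>
    rw [hAt0 i, abs_of_pos (by positivity)]
    have e2 : 1 / sp ≤ sq / (sp * sp) := by
      rw [div_le_div_iff₀ hsp0 (by positivity)]
      nlinarith
    have e1 : sq / (sp * sp) = (1 / sq) * (((m:ℝ) + 2) / ((m:ℝ) + 1)) := by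
      rw [← hsp2, ← hsq2]; field_simp
    calc 1 / sp ≤ (1 / sq) * (((m:ℝ) + 2) / ((m:ℝ) + 1)) := by rw [← e1]; exact e2
      _ ≤ M * (((m:ℝ) + 2) / ((m:ℝ) + 1)) := by
          apply mul_le_mul_of_nonneg_right hM (by positivity)
      _ ≤ M * (((m:ℝ) + 2) / ((m:ℝ) + 1) + sq / sp * M) := by nlinarith [mul_nonneg (mul_nonneg (div_nonneg hsq0.le hsp0.le) hM0) hM0]
  | succ j =>
    rw [hAt i j, hdiv1, hmul]
    have hx : |X i j| ≤ M := by rw [hX]; exact abs_le_maxEntry A _ _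
    have hv' : |v i| ≤ M := by rw [hv]; exact abs_le_maxEntry A _ _
    have hu' : |u j| ≤ M := by rw [hu]; exact abs_le_maxEntry A _ _
    have hcpos : 0 < sp / sq + a := by positivity
    have hcinv : (sp / sq + a)⁻¹ ≤ sq / sp := by
      have h1 : sp / sq ≤ sp / sq + a := by linarith
      have h2 := inv_anti₀ (show (0:ℝ) < sp / sq by positivity) h1
      rwa [inv_div] at h2
    have habs : |-v i + 1 / (sp * sq)| ≤ M + 1 / (sp * sq) := by
      calc |-v i + 1 / (sp * sq)| ≤ |-v i| + |1 / (sp * sq)| := abs_add_le _ _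
        _ = |v i| + 1 / (sp * sq) := by
            rw [abs_neg, abs_of_pos (show (0:ℝ) < 1 / (sp * sq) by positivity)]
        _ ≤ M + 1 / (sp * sq) := by linarith
    have key : |X i j + (sp / sq + a)⁻¹ * ((-v i + 1 / (sp * sq)) * u j)|
        ≤ M + (sq / sp) * ((M + 1 / (sp * sq)) * M) := by
      calc |X i j + (sp / sq + a)⁻¹ * ((-v i + 1 / (sp * sq)) * u j)|
          ≤ |X i j| + (sp / sq + a)⁻¹ * (|-v i + 1 / (sp * sq)| * |u j|) := by
            refine (abs_add_le _ _).trans ?_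
            rw [abs_mul, abs_mul, abs_of_pos (inv_pos.2 hcpos)]
        _ ≤ M + (sq / sp) * ((M + 1 / (sp * sq)) * M) := by
            gcongr <;> first
              | exact (abs_nonneg _).trans habs
              | exact abs_nonneg _
              | assumption
    refine key.trans (le_of_eq ?_)
    have hpq : sq * sq = sp * sp + 1 := by rw [hsp2, hsq2]; ring
    rw [← hsp2, ← hsq2]
    field_simp
    linear_combination (-M) * hpq
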